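/- If Y is an integrable real random variable and y ∈ ℝ with P(Y ≤ y) > 0, then for every event F with P(F) ≥ P(Y ≤ y) and P(F ∩ {Y ≤ y}) > 0, the conditional expectation satisfies E[Y | F] ≥ E[Y | Y ≤ y]. -/

import Mathlib

open MeasureTheory

/-- Conditional expectation of a random variable given an event of positive probability. -/
noncomputable def condExpEvent {Ω : Type*} [MeasurableSpace Ω] (μ : Measure Ω)
    (Y : Ω → ℝ) (A : Set Ω) : ℝ :=
  (∫ ω in A, Y ω ∂μ) / (μ A).toReal

/-- If `Y` is integrable, `P(Y ≤ y) > 0`, and `F` is an event with `P(F) ≥ P(Y ≤ y)` and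
`P(F ∩ {Y ≤ y}) > 0`, then `E[Y | F] ≥ E[Y | Y ≤ y]`. -/
theorem stmt0 {Ω : Type*} [MeasurableSpace Ω] (μ : Measure Ω) [IsProbabilityMeasure μ]
    (Y : Ω → ℝ) (hY : Integrable Y μ) (y : ℝ)
    (h0 : 0 < μ {ω | Y ω ≤ y})
    (F : Set Ω) (hF : MeasurableSet F)
    (hge : μ {ω | Y ω ≤ y} ≤ μ F)
    (hpos : 0 < μ (F ∩ {ω | Y ω ≤ y})) :
    condExpEvent μ Y {ω | Y ω ≤ y} ≤ condExpEvent μ Y F := by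
  classical
  have hsm := hY.1
  set Y' : Ω → ℝ := hsm.mk Y with hY'def
  have hmeas : Measurable Y' := hsm.stronglyMeasurable_mk.measurable
  have hae : Y =ᵐ[μ] Y' := hsm.ae_eq_mk
  have hYint' : Integrable Y' μ := hY.congr hae
  set A : Set Ω := {ω | Y ω ≤ y} with hAdef
  set A' : Set Ω := {ω | Y' ω ≤ y} with hA'def
  have hA' : MeasurableSet A' := measurableSet_le hmeas measurable_const
  have hAe : A =ᵐ[μ] A' := by
    filter_upwards [hae] with ω h
    show (Y ω ≤ y) = (Y' ω ≤ y)
    rw [h]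
  have hrA : μ.restrict A = μ.restrict A' := Measure.restrict_congr_set hAe
  have hμA : μ A = μ A' := measure_congr hAe
  have hIA : (∫ ω in A, Y ω ∂μ) = ∫ ω in A', Y' ω ∂μ := by
    rw [hrA]; exact integral_congr_ae (ae_restrict_of_ae hae)
  have hIF : (∫ ω in F, Y ω ∂μ) = ∫ ω in F, Y' ω ∂μ :=
    integral_congr_ae (ae_restrict_of_ae hae)
  -- key bounds
  have key_le : ∀ S : Set Ω, MeasurableSet S → (∀ ω ∈ S, Y' ω ≤ y) →
      (∫ ω in S, Y' ω ∂μ) ≤ y * (μ S).toReal := by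
    intro S hS h
    calc (∫ ω in S, Y' ω ∂μ) ≤ ∫ _ in S, y ∂μ :=
          setIntegral_mono_on hYint'.integrableOn
            (integrableOn_const (measure_ne_top μ S)) hS h
      _ = y * (μ S).toReal := by rw [setIntegral_const, smul_eq_mul, mul_comm]; rfl
  have key_ge : ∀ S : Set Ω, MeasurableSet S → (∀ ω ∈ S, y ≤ Y' ω) →
      y * (μ S).toReal ≤ ∫ ω in S, Y' ω ∂μ := by
    intro S hS h
    calc y * (μ S).toReal = ∫ _ in S, y ∂μ := by
          rw [setIntegral_const, smul_eq_mul, mul_comm]; rfl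
      _ ≤ ∫ ω in S, Y' ω ∂μ :=
          setIntegral_mono_on (integrableOn_const (measure_ne_top μ S))
            hYint'.integrableOn hS h
  -- notation for pieces
  set p : ℝ := (μ (A' ∩ F)).toReal with hp
  set q : ℝ := (μ (F \ A')).toReal with hq
  set r : ℝ := (μ (A' \ F)).toReal with hr
  have hp0 : 0 ≤ p := ENNReal.toReal_nonneg
  have hq0 : 0 ≤ q := ENNReal.toReal_nonneg
  have hr0 : 0 ≤ r := ENNReal.toReal_nonneg
  have haddA : p + r = (μ A').toReal := by
    rw [hp, hr, ← ENNReal.toReal_add (measure_ne_top μ _) (measure_ne_top μ _),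
      measure_inter_add_diff A' hF]
  have haddF : p + q = (μ F).toReal := by
    rw [hp, hq, Set.inter_comm, ← ENNReal.toReal_add (measure_ne_top μ _) (measure_ne_top μ _),
      measure_inter_add_diff F hA']
  have hμApos : 0 < (μ A').toReal :=
    ENNReal.toReal_pos (by rw [← hμA]; exact h0.ne') (measure_ne_top μ _)
  have hμFpos : 0 < (μ F).toReal :=
    ENNReal.toReal_pos (lt_of_lt_of_le h0 hge).ne' (measure_ne_top μ _)
  have haf : (μ A').toReal ≤ (μ F).toReal := by
    rw [← hμA]
    exact (ENNReal.toReal_le_toReal (measure_ne_top μ _) (measure_ne_top μ _)).mpr hge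
  -- integral splits
  have hdisj1 : Disjoint (A' ∩ F) (A' \ F) :=
    Set.disjoint_left.mpr fun ω h h' => h'.2 h.2
  have hdisj2 : Disjoint (A' ∩ F) (F \ A') :=
    Set.disjoint_left.mpr fun ω h h' => h'.2 h.1
  have hsplitA : (∫ ω in A', Y' ω ∂μ) =
      (∫ ω in A' ∩ F, Y' ω ∂μ) + ∫ ω in A' \ F, Y' ω ∂μ := by
    rw [← setIntegral_union hdisj1 (hA'.diff hF) hYint'.integrableOn hYint'.integrableOn,
      Set.inter_union_diff]
  have hsplitF : (∫ ω in F, Y' ω ∂μ) =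
      (∫ ω in A' ∩ F, Y' ω ∂μ) + ∫ ω in F \ A', Y' ω ∂μ := by
    rw [← setIntegral_union hdisj2 (hF.diff hA') hYint'.integrableOn hYint'.integrableOn,
      Set.inter_comm, Set.inter_union_diff]
  set s : ℝ := ∫ ω in A' ∩ F, Y' ω ∂μ with hs
  set v : ℝ := ∫ ω in F \ A', Y' ω ∂μ with hv
  set t : ℝ := ∫ ω in A' \ F, Y' ω ∂μ with ht
  have hsb : s ≤ y * p := key_le _ (hA'.inter hF) fun ω hω => hω.1
  have htb : t ≤ y * r := key_le _ (hA'.diff hF) fun ω hω => hω.1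
  have hvb : y * q ≤ v := key_ge _ (hF.diff hA') fun ω hω => (lt_of_not_ge hω.2).le
  -- finish
  unfold condExpEvent
  rw [hIA, hIF, hμA, hsplitA, hsplitF, div_le_div_iff₀ hμApos hμFpos, ← haddA, ← haddF]
  nlinarith [mul_nonneg (sub_nonneg.2 hsb) (sub_nonneg.2 (by linarith [haddA, haddF, haf] : r ≤ q)),
    mul_nonneg (sub_nonneg.2 htb) (by linarith : (0:ℝ) ≤ p + q),
    mul_nonneg (sub_nonneg.2 hvb) (by linarith : (0:ℝ) ≤ p + r)]
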